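/- Let T be a finite tree and let F be a finite family of subtrees of T (nonempty connected subgraphs). Then the maximum number of pairwise vertex-disjoint subtrees in F equals the minimum number of vertices of T needed to intersect every member of F. -/

import Mathlib

open SimpleGraph

namespace DiracAux
set_option linter.unusedSectionVars false

variable {V : Type*} [DecidableEq V] {T : SimpleGraph V}

noncomputable def thePath (hT : T.IsTree) (a b : V) : T.Walk a b :=
  (hT.existsUnique_path a b).exists.choose

lemma thePath_isPath (hT : T.IsTree) (a b : V) : (thePath hT a b).IsPath :=
  (hT.existsUnique_path a b).exists.choose_spec

lemma thePath_unique (hT : T.IsTree) {a b : V} {p : T.Walk a b} (hp : p.IsPath) :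
    p = thePath hT a b :=
  (hT.existsUnique_path a b).unique hp (thePath_isPath hT a b)

lemma support_thePath_subset (hT : T.IsTree) {a b : V} (q : T.Walk a b) :
    (thePath hT a b).support ⊆ q.support := by
  rw [← thePath_unique hT q.bypass_isPath]
  exact q.support_bypass_subset

lemma length_thePath (hT : T.IsTree) (a b : V) :
    (thePath hT a b).length = T.dist a b := by
  refine le_antisymm ?_ (SimpleGraph.dist_le _)
  obtain ⟨q, hq⟩ := (hT.isConnected.preconnected a b).exists_walk_length_eq_dist
  calc (thePath hT a b).length = q.bypass.length := by
        rw [← thePath_unique hT q.bypass_isPath]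
    _ ≤ q.length := q.length_bypass_le
    _ = T.dist a b := hq

lemma dist_add_dist_of_mem_thePath (hT : T.IsTree) {a b v : V}
    (hv : v ∈ (thePath hT a b).support) :
    T.dist a v + T.dist v b = T.dist a b := by
  have e1 : T.dist a v = ((thePath hT a b).takeUntil v hv).length := by
    rw [← length_thePath hT a v,
      ← thePath_unique hT ((thePath_isPath hT a b).takeUntil hv)]
  have e2 : T.dist v b = ((thePath hT a b).dropUntil v hv).length := by
    rw [← length_thePath hT v b,
      ← thePath_unique hT ((thePath_isPath hT a b).dropUntil hv)]
  have e3 := congrArg Walk.length ((thePath hT a b).take_spec hv)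
  rw [Walk.length_append] at e3
  rw [e1, e2, ← length_thePath hT a b, e3]

/-- Paths between two vertices of a set inducing a connected subgraph stay in the set. -/
lemma thePath_support_subset_of_connected (hT : T.IsTree) {S : Set V}
    (hS : (T.induce S).Connected) {u w : V} (hu : u ∈ S) (hw : w ∈ S) :
    ∀ x ∈ (thePath hT u w).support, x ∈ S := by
  obtain ⟨q0⟩ := hS.preconnected ⟨u, hu⟩ ⟨w, hw⟩
  let q : T.Walk u w := q0.map (SimpleGraph.Embedding.induce S).toHom
  intro x hx
  have hx' := support_thePath_subset hT q hx
  rw [show q.support = _ from Walk.support_map _ _] at hx'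
  obtain ⟨y, _, rfl⟩ := List.mem_map.mp hx'
  exact y.2

/-- The vertex of a connected set closest to `r` lies on every path from `r`
to a vertex of the set. -/
lemma gate_mem (hT : T.IsTree) {S : Set V} (hS : (T.induce S).Connected) (r : V) {v : V}
    (hv : v ∈ S) (hmin : ∀ u ∈ S, T.dist r v ≤ T.dist r u) :
    ∀ w ∈ S, v ∈ (thePath hT r w).support := by
  suffices H : ∀ n, ∀ w ∈ S, T.dist v w = n → v ∈ (thePath hT r w).support by
    intro w hw; exact H _ w hw rfl
  intro n
  induction n using Nat.strong_induction_on with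
  | _ n ih =>
    intro w hw hn
    by_cases hvw : v = w
    · subst hvw; exact Walk.end_mem_support _
    have hd0 : T.dist v w ≠ 0 :=
      SimpleGraph.dist_ne_zero_iff_ne_and_reachable.mpr
        ⟨hvw, hT.isConnected.preconnected v w⟩
    -- peel the last edge of the path from v to w
    obtain ⟨x, h', q', hq'⟩ :=
      Walk.exists_eq_cons_of_ne (Ne.symm hvw) (thePath hT v w).reverse
    have hpw : thePath hT v w = q'.reverse.concat h'.symm := by
      rw [← Walk.reverse_reverse (thePath hT v w), hq', Walk.reverse_cons]
      rfl
    set q : T.Walk v x := q'.reverse with hqdef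
    have hqpath : q.IsPath := by
      have hp := thePath_isPath hT v w
      rw [hpw, Walk.concat_eq_append] at hp
      exact hp.of_append_left
    have hqeq : q = thePath hT v x := thePath_unique hT hqpath
    have hxS : x ∈ S := by
      apply thePath_support_subset_of_connected hT hS hv hw
      rw [hpw, Walk.support_concat]
      simp [Walk.end_mem_support]
    have hdx : T.dist v x < n := by
      have h1 : T.dist v x = q.length := by rw [hqeq, length_thePath]
      have h2 : q.length + 1 = T.dist v w := by
        rw [← length_thePath hT v w, hpw, Walk.length_concat]
      omega
    have hvx := ih _ hdx x hxS rfl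
    set P := thePath hT r x with hP
    by_cases hwP : w ∈ P.support
    · have hvsplit : v ∈ (P.takeUntil w hwP).support ∨ v ∈ (P.dropUntil w hwP).support := by
        rw [← Walk.mem_support_append_iff, P.take_spec hwP]; exact hvx
      rcases hvsplit with h1 | h2
      · have heq : P.takeUntil w hwP = thePath hT r w :=
          thePath_unique hT ((thePath_isPath hT r x).takeUntil hwP)
        rw [← heq]; exact h1
      · exfalso
        have hdrop : P.dropUntil w hwP = thePath hT w x :=
          thePath_unique hT ((thePath_isPath hT r x).dropUntil hwP)
        have e1 : T.dist r v + T.dist v x = T.dist r x :=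
          dist_add_dist_of_mem_thePath hT hvx
        have e2 : T.dist r w + T.dist w x = T.dist r x :=
          dist_add_dist_of_mem_thePath hT hwP
        have e3 : T.dist w v + T.dist v x = T.dist w x :=
          dist_add_dist_of_mem_thePath hT (hdrop ▸ h2)
        have e4 : T.dist r v ≤ T.dist r w := hmin w hw
        have e5 : T.dist w v = 0 := by omega
        exact hvw (hT.isConnected.dist_eq_zero_iff.mp e5).symm
    · have hQpath : (P.concat h'.symm).IsPath := by
        rw [Walk.isPath_def, Walk.support_concat,
          List.nodup_append']
        refine ⟨(thePath_isPath hT r x).support_nodup, List.nodup_singleton w, ?_⟩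
        intro a ha hb
        rw [List.mem_singleton] at hb
        exact hwP (hb ▸ ha)
      have heq : P.concat h'.symm = thePath hT r w := thePath_unique hT hQpath
      rw [← heq, Walk.support_concat]
      exact List.mem_append_left _ hvx

/-- If two connected sets meet, and the gate of the first is at least as far
from `r` as the gate of the second, then the first gate lies in the second set. -/
lemma gate_mem_of_inter (hT : T.IsTree) {S S' : Set V}
    (hS : (T.induce S).Connected) (hS' : (T.induce S').Connected) (r : V) {v t : V}
    (hv : v ∈ S) (hmin : ∀ u ∈ S, T.dist r v ≤ T.dist r u)
    (ht : t ∈ S') (hmin' : ∀ u ∈ S', T.dist r t ≤ T.dist r u)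
    (hle : T.dist r t ≤ T.dist r v) {w : V} (hwS : w ∈ S) (hwS' : w ∈ S') :
    v ∈ S' := by
  have h1 : v ∈ (thePath hT r w).support := gate_mem hT hS r hv hmin w hwS
  have h2 : v ∈ ((thePath hT r t).append (thePath hT t w)).support :=
    support_thePath_subset hT _ h1
  rw [Walk.mem_support_append_iff] at h2
  rcases h2 with h2 | h2
  · have e1 : T.dist r v + T.dist v t = T.dist r t :=
      dist_add_dist_of_mem_thePath hT h2
    have e2 : T.dist v t = 0 := by omega
    have : v = t := hT.isConnected.dist_eq_zero_iff.mp e2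
    exact this ▸ ht
  · exact thePath_support_subset_of_connected hT hS' ht hwS' v h2

section Family

variable {ι : Type*} (F : ι → Set V)

/-- Easy direction: a pairwise-disjoint subfamily is no larger than any transversal. -/
lemma nu_le_tau (s : Finset ι)
    (hs : (s : Set ι).Pairwise fun i j => Disjoint (F i) (F j))
    (C : Finset V) (hC : ∀ i, ∃ v ∈ C, v ∈ F i) : s.card ≤ C.card := by
  choose f hfC hfF using hC
  apply Finset.card_le_card_of_injOn f (fun i _ => hfC i)
  intro i hi j hj hij
  by_contra hne
  exact Set.disjoint_left.mp (hs (Finset.mem_coe.mpr hi) (Finset.mem_coe.mpr hj) hne)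
    (hfF i) (hij ▸ hfF j)

/-- Hard direction: there is a pairwise-disjoint subfamily and a transversal
of the active part of no greater size. -/
lemma exists_matching_cover [Fintype V] (hT : T.IsTree)
    (hF : ∀ i, (T.induce (F i)).Connected) (r : V) (A : Finset ι) :
    ∃ (s : Finset ι) (C : Finset V), s ⊆ A ∧
      ((s : Set ι).Pairwise fun i j => Disjoint (F i) (F j)) ∧
      C.card ≤ s.card ∧ ∀ i ∈ A, ∃ v ∈ C, v ∈ F i := by
  classical
  induction A using Finset.strongInduction with
  | _ A ih =>
  rcases A.eq_empty_or_nonempty with rfl | hA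
  · exact ⟨∅, ∅, Finset.Subset.refl _, by simp, by simp, by simp⟩
  -- gates of each subtree
  have htop : ∀ i : ι, ∃ v ∈ F i, ∀ u ∈ F i, T.dist r v ≤ T.dist r u := by
    intro i
    have hne : ((F i).toFinite.toFinset).Nonempty := by
      obtain ⟨⟨w, hw⟩⟩ := (hF i).nonempty
      exact ⟨w, (F i).toFinite.mem_toFinset.mpr hw⟩
    obtain ⟨v, hv, hmin⟩ :=
      ((F i).toFinite.toFinset).exists_min_image (fun u => T.dist r u) hne
    exact ⟨v, (F i).toFinite.mem_toFinset.mp hv,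
      fun u hu => hmin u ((F i).toFinite.mem_toFinset.mpr hu)⟩
  choose top htopmem htopmin using htop
  -- a deepest gate
  obtain ⟨i, hiA, himax⟩ :=
    A.exists_max_image (fun j => T.dist r (top j)) hA
  set v := top i with hv
  -- every active subtree meeting `F i` contains `v`
  have hkey : ∀ j ∈ A, ¬ Disjoint (F i) (F j) → v ∈ F j := by
    intro j hj hdisj
    obtain ⟨w, hwi, hwj⟩ := Set.not_disjoint_iff.mp hdisj
    exact gate_mem_of_inter hT (hF i) (hF j) r (htopmem i) (htopmin i)
      (htopmem j) (htopmin j) (himax j hj) hwi hwj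
  set A' := A.filter (fun j => v ∉ F j) with hA'
  have hA'ss : A' ⊂ A :=
    Finset.filter_ssubset.mpr ⟨i, hiA, by simp [hv, htopmem i]⟩
  obtain ⟨s', C', hs'sub, hpw, hcard, hcov⟩ := ih A' hA'ss
  have hvs' : ∀ j ∈ s', v ∉ F j := fun j hj =>
    (Finset.mem_filter.mp (hs'sub hj)).2
  have his' : i ∉ s' := fun h => hvs' i h (htopmem i)
  refine ⟨insert i s', insert v C', ?_, ?_, ?_, ?_⟩
  · intro j hj
    rcases Finset.mem_insert.mp hj with rfl | hj
    · exact hiA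
    · exact (Finset.filter_subset _ A) (hs'sub hj)
  · rw [Finset.coe_insert]
    apply Set.Pairwise.insert hpw
    intro j hj _
    have hdisj : Disjoint (F i) (F j) := by
      by_contra hnd
      exact hvs' j (Finset.mem_coe.mp hj)
        (hkey j ((Finset.filter_subset _ A) (hs'sub (Finset.mem_coe.mp hj))) hnd)
    exact ⟨hdisj, hdisj.symm⟩
  · calc (insert v C').card ≤ C'.card + 1 := Finset.card_insert_le _ _
      _ ≤ s'.card + 1 := by omega
      _ = (insert i s').card := (Finset.card_insert_of_notMem his').symm
  · intro j hj
    by_cases hvj : v ∈ F j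
    · exact ⟨v, Finset.mem_insert_self _ _, hvj⟩
    · obtain ⟨u, huC, huF⟩ := hcov j (Finset.mem_filter.mpr ⟨hj, hvj⟩)
      exact ⟨u, Finset.mem_insert_of_mem huC, huF⟩

end Family
end DiracAux

/-- Dirac's theorem on subtrees of a tree: the maximum number of pairwise
vertex-disjoint members of a family of subtrees equals the minimum number of
vertices meeting every member. -/
theorem dirac_subtrees_nu_eq_tau {V : Type*} [Fintype V] [DecidableEq V]
    (T : SimpleGraph V) (hT : T.IsTree)
    {ι : Type*} [Fintype ι] (F : ι → Set V)
    (hF : ∀ i, (T.induce (F i)).Connected) :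
    sSup {n : ℕ | ∃ s : Finset ι, s.card = n ∧
        (s : Set ι).Pairwise fun i j => Disjoint (F i) (F j)}
      = sInf {n : ℕ | ∃ C : Finset V, C.card = n ∧ ∀ i, ∃ v ∈ C, v ∈ F i} := by
  classical
  obtain ⟨r⟩ : Nonempty V := hT.isConnected.nonempty
  set M := {n : ℕ | ∃ s : Finset ι, s.card = n ∧
      (s : Set ι).Pairwise fun i j => Disjoint (F i) (F j)} with hM
  set K := {n : ℕ | ∃ C : Finset V, C.card = n ∧ ∀ i, ∃ v ∈ C, v ∈ F i} with hK
  have hMne : M.Nonempty := ⟨0, ∅, by simp, by simp⟩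
  have hMbdd : BddAbove M := by
    refine ⟨Fintype.card ι, ?_⟩
    rintro n ⟨s', hcard, -⟩
    rw [← hcard, ← Finset.card_univ]
    exact Finset.card_le_univ s'
  have hKne : K.Nonempty := by
    refine ⟨(Finset.univ : Finset V).card, Finset.univ, rfl, fun i => ?_⟩
    obtain ⟨⟨w, hw⟩⟩ := (hF i).nonempty
    exact ⟨w, Finset.mem_univ w, hw⟩
  obtain ⟨s, C, -, hpw, hcard, hcov⟩ :=
    DiracAux.exists_matching_cover F hT hF r Finset.univ
  apply le_antisymm
  · apply csSup_le hMne
    rintro n ⟨s', hs'card, hs'pw⟩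
    obtain ⟨C₀, hC₀card, hC₀⟩ := Nat.sInf_mem hKne
    calc n = s'.card := hs'card.symm
      _ ≤ C₀.card := DiracAux.nu_le_tau F s' hs'pw C₀ hC₀
      _ = sInf K := hC₀card
  · calc sInf K ≤ C.card :=
        Nat.sInf_le ⟨C, rfl, fun i => hcov i (Finset.mem_univ i)⟩
      _ ≤ s.card := hcard
      _ ≤ sSup M := le_csSup hMbdd ⟨s, rfl, hpw⟩
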